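/- For the language L_EQ(n) = { x #^n y : x, y ∈ {0,1}^n, x = y }, the 2DFA time-space complexity is Θ(n^2): there is a 2DFA recognizing L_EQ(n) with time O(n) and 2^{O(n)} states (so TS = O(n^2)), and every 2DFA recognizing L_EQ(n) has TS ≥ n · (D^cc(EQ_n) − 1) = n^2. -/

import Mathlib

/-- A deterministic communication protocol tree: at each internal node one of the
two players computes a bit from her input and sends it. -/
inductive Protocol (X Y : Type) where
  | leaf : Bool → Protocol X Y
  | nodeA : (X → Bool) → Protocol X Y → Protocol X Y → Protocol X Y
  | nodeB : (Y → Bool) → Protocol X Y → Protocol X Y → Protocol X Y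

namespace Protocol

/-- Communication cost (depth) of a protocol. -/
def depth {X Y : Type} : Protocol X Y → ℕ
  | .leaf _ => 0
  | .nodeA _ p q => max p.depth q.depth + 1
  | .nodeB _ p q => max p.depth q.depth + 1

/-- Output of a protocol on input `(x, y)`. -/
def eval {X Y : Type} : Protocol X Y → X → Y → Bool
  | .leaf b, _, _ => b
  | .nodeA g p q, x, y => if g x then p.eval x y else q.eval x y
  | .nodeB g p q, x, y => if g y then p.eval x y else q.eval x y

end Protocol

/-- Deterministic communication complexity: least cost of a protocol computing `f`. -/
noncomputable def Dcc {X Y : Type} (f : X → Y → Bool) : ℕ :=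
  sInf {c : ℕ | ∃ π : Protocol X Y, π.depth ≤ c ∧ ∀ x y, π.eval x y = f x y}

/-- A two-way deterministic finite automaton over alphabet `α`, with states
`Fin Q`, end-markers (`Sum.inr false` = left marker `⊢`, `Sum.inr true` = right
marker `$`), and head moves in `{-1, 0, 1}`. -/
structure TwoDFA (α : Type) where
  Q : ℕ
  hQ : 0 < Q
  init : Fin Q
  accept : Finset (Fin Q)
  δ : Fin Q → (α ⊕ Bool) → Fin Q × ℤ
  hmove : ∀ q a, ((δ q a).2).natAbs ≤ 1

namespace TwoDFA

/-- The tape symbol at (integer) position `i` when the input word is `w`: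
position `0` holds the left end-marker, position `w.length + 1` the right
end-marker, and positions `1, …, w.length` the symbols of `w`. -/
def symbolAt {α : Type} (w : List α) (i : ℤ) : α ⊕ Bool :=
  if i ≤ 0 then Sum.inr false
  else if (w.length + 1 : ℤ) ≤ i then Sum.inr true
  else match w[i.toNat - 1]? with
    | some a => Sum.inl a
    | none => Sum.inr true

/-- One computation step on input `w`, from configuration (state, head position). -/
def step {α : Type} (M : TwoDFA α) (w : List α) (c : Fin M.Q × ℤ) : Fin M.Q × ℤ :=
  ((M.δ c.1 (symbolAt w c.2)).1, c.2 + (M.δ c.1 (symbolAt w c.2)).2)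

/-- Configuration after `k` steps on input `w`, starting at the initial state
scanning the left end-marker. -/
def conf {α : Type} (M : TwoDFA α) (w : List α) (k : ℕ) : Fin M.Q × ℤ :=
  (step M w)^[k] (M.init, 0)

/-- `M` recognizes `L` within time `T`: members of `L` are accepted within `T`
steps, and non-members are never accepted. -/
def Recognizes {α : Type} (M : TwoDFA α) (L : Set (List α)) (T : ℕ) : Prop :=
  ∀ w : List α,
    (w ∈ L ↔ ∃ k ≤ T, (M.conf w k).1 ∈ M.accept) ∧
    (w ∉ L → ∀ k : ℕ, (M.conf w k).1 ∉ M.accept)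

/-- Time-space complexity: running time times `log₂` of the number of states. -/
noncomputable def TS {α : Type} (M : TwoDFA α) (T : ℕ) : ℝ :=
  (T : ℝ) * Real.logb 2 (M.Q : ℝ)

end TwoDFA

/-- The word `x #^n y` over the alphabet `{0, 1, #}` (here `Option Bool`, with
`none` playing the role of `#`). -/
def encodePair (n : ℕ) (x y : Fin n → Bool) : List (Option Bool) :=
  (List.ofFn fun i => some (x i)) ++ List.replicate n none ++ (List.ofFn fun i => some (y i))

/-- The language `L_f(n) = { x #^n y : f(x,y) = 1 }`. -/
def Lf (n : ℕ) (f : (Fin n → Bool) → (Fin n → Bool) → Bool) : Set (List (Option Bool)) :=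
  { w | ∃ x y, f x y = true ∧ w = encodePair n x y }

/-- The equality function `EQ_n`. -/
def EQfun (n : ℕ) : (Fin n → Bool) → (Fin n → Bool) → Bool := fun x y => decide (x = y)

-- PRELUDE

section Prelude

lemma enc_length (n : ℕ) (x y : Fin n → Bool) : (encodePair n x y).length = 3 * n := by
  simp [encodePair]; omega

lemma enc_get? (n : ℕ) (x y : Fin n → Bool) (j : ℕ) :
    (encodePair n x y)[j]? =
      if h : j < n then some (some (x ⟨j, h⟩))
      else if j < 2 * n then some none
      else if h : j < 3 * n then some (some (y ⟨j - 2 * n, by omega⟩))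
      else none := by
  unfold encodePair
  rw [List.getElem?_append, List.getElem?_append]
  simp only [List.length_append, List.length_ofFn, List.length_replicate]
  by_cases h1 : j < n
  · rw [if_pos (by omega), if_pos (by omega), dif_pos h1]
    simp [List.getElem?_ofFn, List.ofFnNthVal, h1]
  · by_cases h2 : j < 2 * n
    · rw [if_pos (by omega), if_neg (by omega), dif_neg h1, if_pos h2]
      simp [List.getElem?_replicate, show j - n < n by omega]
    · by_cases h3 : j < 3 * n
      · rw [if_neg (by omega), dif_neg h1, if_neg h2, dif_pos h3]
        have hlt : j - (n + n) < n := by omega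
        have he : (⟨j - (n + n), hlt⟩ : Fin n) = ⟨j - 2 * n, by omega⟩ := Fin.ext (by simp; omega)
        simp [List.getElem?_ofFn, List.ofFnNthVal, hlt, he]
      · rw [if_neg (by omega), dif_neg h1, if_neg h2, dif_neg h3]
        have hlt : ¬ j - (n + n) < n := by omega
        simp [List.getElem?_ofFn, List.ofFnNthVal, hlt]

namespace TwoDFA

lemma symbolAt_nonpos {α : Type} (w : List α) {i : ℤ} (h : i ≤ 0) :
    symbolAt w i = Sum.inr false := by simp [symbolAt, h]

lemma symbolAt_big {α : Type} (w : List α) {i : ℤ} (h : (w.length : ℤ) + 1 ≤ i) :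
    symbolAt w i = Sum.inr true := by
  have : ¬ i ≤ 0 := by omega
  simp [symbolAt, this, h]

lemma symbolAt_idx {α : Type} (w : List α) {j : ℕ} {a : α} (ha : w[j]? = some a) :
    symbolAt w ((j : ℤ) + 1) = Sum.inl a := by
  have hj : j < w.length := by
    by_contra hc
    rw [List.getElem?_eq_none (by omega)] at ha
    exact absurd ha (by simp)
  have h0 : ¬ ((j : ℤ) + 1 ≤ 0) := by omega
  have h1 : ¬ ((w.length : ℤ) + 1 ≤ (j : ℤ) + 1) := by omega
  have h2 : ((j : ℤ) + 1).toNat - 1 = j := by omega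
  unfold symbolAt
  rw [if_neg h0, if_neg h1, h2, ha]

lemma symbolAt_eq_of {α : Type} (w w' : List α) (p : ℤ) (hl : w.length = w'.length)
    (hg : w[p.toNat - 1]? = w'[p.toNat - 1]?) :
    symbolAt w p = symbolAt w' p := by
  unfold symbolAt
  rw [hl, hg]

end TwoDFA

end Prelude

-- PRELUDE 2 : counting lists of bounded length

def listEnc (γ : Type) (m : ℕ) (l : {l : List γ // l.length ≤ m}) :
    Σ j : Fin (m + 1), (Fin (j : ℕ) → γ) :=
  ⟨⟨l.1.length, by omega⟩, fun i => l.1.get ⟨i, i.2⟩⟩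

lemma listEnc_inj (γ : Type) (m : ℕ) : Function.Injective (listEnc γ m) := by
  rintro ⟨l, hl⟩ ⟨l', hl'⟩ h
  have h1 : l.length = l'.length := by
    have := congrArg (fun z => ((Sigma.fst z : Fin (m+1)) : ℕ)) h
    simpa [listEnc] using this
  have h2 := (Sigma.mk.inj_iff.mp h).2
  rw [Fin.heq_fun_iff (by simpa [listEnc] using h1)] at h2
  apply Subtype.ext
  apply List.ext_get h1
  intro i hi hi'
  simpa [listEnc] using h2 ⟨i, hi⟩

lemma geom_sum_le (q m : ℕ) (hq : 2 ≤ q) :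
    ∑ j ∈ Finset.range (m + 1), q ^ j ≤ 2 * q ^ m - 1 := by
  induction m with
  | zero => simp
  | succ m ih =>
      rw [Finset.sum_range_succ]
      have h1 : 1 ≤ q ^ m := Nat.one_le_pow _ _ (by omega)
      have h2 : 2 * q ^ m ≤ q ^ (m + 1) := by
        rw [pow_succ, mul_comm (q ^ m) q]
        exact Nat.mul_le_mul_right _ hq
      have h3 : 1 ≤ q ^ (m+1) := Nat.one_le_pow _ _ (by omega)
      omega

noncomputable instance listLE.fintype (γ : Type) [Fintype γ] (m : ℕ) :
    Fintype {l : List γ // l.length ≤ m} :=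
  Fintype.ofInjective (listEnc γ m) (listEnc_inj γ m)

lemma card_listLE_le (γ : Type) [Fintype γ] (m : ℕ) (hq : 2 ≤ Fintype.card γ) :
    Fintype.card {l : List γ // l.length ≤ m} ≤ 2 * (Fintype.card γ) ^ m - 1 := by
  have h1 : Fintype.card {l : List γ // l.length ≤ m} ≤
      Fintype.card (Σ j : Fin (m + 1), (Fin (j : ℕ) → γ)) :=
    Fintype.card_le_of_injective _ (listEnc_inj γ m)
  have h2 : Fintype.card (Σ j : Fin (m + 1), (Fin (j : ℕ) → γ)) =
      ∑ j ∈ Finset.range (m + 1), (Fintype.card γ) ^ j := by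
    rw [Fintype.card_sigma]
    simp only [Fintype.card_fun, Fintype.card_fin]
    exact Fin.sum_univ_eq_sum_range (fun j => (Fintype.card γ) ^ j) (m + 1)
  exact h1.trans (h2 ▸ geom_sum_le _ _ hq)

-- injectivity of encodePair

lemma encodePair_inj (n : ℕ) {x y a b : Fin n → Bool}
    (h : encodePair n x y = encodePair n a b) : x = a ∧ y = b := by
  unfold encodePair at h
  obtain ⟨h12, h3⟩ := List.append_inj h (by simp)
  obtain ⟨h1, -⟩ := List.append_inj h12 (by simp)
  constructor
  · funext i
    exact Option.some.inj (congrFun (List.ofFn_inj.mp h1) i)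
  · funext i
    exact Option.some.inj (congrFun (List.ofFn_inj.mp h3) i)

lemma mem_Lf_iff (n : ℕ) (x y : Fin n → Bool) :
    encodePair n x y ∈ Lf n (EQfun n) ↔ x = y := by
  constructor
  · rintro ⟨a, b, hab, he⟩
    obtain ⟨h1, h2⟩ := encodePair_inj n he
    subst h1; subst h2
    exact of_decide_eq_true hab
  · rintro rfl
    exact ⟨x, x, by simp [EQfun], rfl⟩

-- UPPER BOUND MACHINE

abbrev UBSub (n : ℕ) := {l : List (Option Bool) // l.length ≤ 3 * n}
abbrev UBS (n : ℕ) := Bool ⊕ UBSub n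

def UBdelta (n : ℕ) : UBS n → (Option Bool ⊕ Bool) → UBS n × ℤ
  | Sum.inl b, _ => (Sum.inl b, 0)
  | Sum.inr l, Sum.inr false =>
      if l.1 = [] then (Sum.inr l, 1) else (Sum.inl false, 0)
  | Sum.inr l, Sum.inl s =>
      if h : l.1.length < 3 * n then (Sum.inr ⟨l.1 ++ [s], by simp; omega⟩, 1)
      else (Sum.inl false, 0)
  | Sum.inr l, Sum.inr true =>
      (Sum.inl (decide (∃ x : Fin n → Bool, l.1 = encodePair n x x)), 0)

lemma UBdelta_move (n : ℕ) : ∀ (s : UBS n) (a : Option Bool ⊕ Bool),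
    ((UBdelta n s a).2).natAbs ≤ 1
  | Sum.inl b, _ => by simp [UBdelta]
  | Sum.inr l, Sum.inr false => by by_cases h : l.1 = [] <;> simp [UBdelta, h]
  | Sum.inr l, Sum.inl s => by by_cases h : l.1.length < 3 * n <;> simp [UBdelta, h]
  | Sum.inr l, Sum.inr true => by simp [UBdelta]

noncomputable def UBe (n : ℕ) : UBS n ≃ Fin (Fintype.card (UBS n)) := Fintype.equivFin _

noncomputable def UBM (n : ℕ) : TwoDFA (Option Bool) where
  Q := Fintype.card (UBS n)
  hQ := Fintype.card_pos
  init := UBe n (Sum.inr ⟨[], by simp⟩)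
  accept := {UBe n (Sum.inl true)}
  δ := fun q a => ((UBe n) (UBdelta n ((UBe n).symm q) a).1, (UBdelta n ((UBe n).symm q) a).2)
  hmove := fun q a => UBdelta_move n _ a

lemma conf_succ {α : Type} (M : TwoDFA α) (w : List α) (k : ℕ) :
    M.conf w (k + 1) = M.step w (M.conf w k) :=
  Function.iterate_succ_apply' _ _ _

lemma UBM_step' (n : ℕ) (w : List (Option Bool)) (c : Fin (UBM n).Q × ℤ) :
    (UBM n).step w c =
      ((UBe n) (UBdelta n ((UBe n).symm c.1) (TwoDFA.symbolAt w c.2)).1,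
        c.2 + (UBdelta n ((UBe n).symm c.1) (TwoDFA.symbolAt w c.2)).2) := rfl

lemma symbolAt_none {α : Type} (w : List α) {i : ℤ} (h1 : 1 ≤ i)
    (h : w[i.toNat - 1]? = none) : TwoDFA.symbolAt w i = Sum.inr true := by
  rcases le_or_gt ((w.length : ℤ) + 1) i with hb | hb
  · exact TwoDFA.symbolAt_big w hb
  · unfold TwoDFA.symbolAt
    rw [if_neg (by omega), if_neg (by omega), h]

/-- The safety invariant for the upper-bound machine. -/
def UBInv (n : ℕ) (w : List (Option Bool)) (c : Fin (UBM n).Q × ℤ) : Prop :=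
  ((UBe n).symm c.1 = Sum.inl false) ∨
  ((UBe n).symm c.1 = Sum.inl true ∧ w ∈ Lf n (EQfun n)) ∨
  (∃ l : UBSub n, (UBe n).symm c.1 = Sum.inr l ∧
    ((c.2 = 0 ∧ l.1 = []) ∨ (1 ≤ c.2 ∧ l.1 = w.take (c.2.toNat - 1))))

lemma UBInv_holds (n : ℕ) (w : List (Option Bool)) (k : ℕ) : UBInv n w ((UBM n).conf w k) := by
  induction k with
  | zero =>
      refine Or.inr (Or.inr ⟨⟨[], by simp⟩, ?_, Or.inl ⟨rfl, rfl⟩⟩)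
      show (UBe n).symm ((UBM n).init) = _
      simp [UBM]
  | succ k ih =>
      rw [conf_succ, UBM_step' n w]
      set c := (UBM n).conf w k with hc
      rcases ih with h | ⟨h, hw⟩ | ⟨l, h, hcase⟩
      · rw [h]; exact Or.inl (by simp [UBdelta])
      · rw [h]; exact Or.inr (Or.inl ⟨by simp [UBdelta], hw⟩)
      · rw [h]
        rcases hcase with ⟨hp0, hnil⟩ | ⟨hp1, htake⟩
        · -- at the left end-marker
          rw [hp0, TwoDFA.symbolAt_nonpos w (le_refl 0)]
          refine Or.inr (Or.inr ⟨l, by simp [UBdelta, hnil], Or.inr ⟨by simp [UBdelta, hnil], ?_⟩⟩)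
          simp [UBdelta, hnil]
        · -- in the middle of the word
          set j : ℕ := c.2.toNat - 1 with hj
          have hpj : c.2 = (j : ℤ) + 1 := by omega
          rcases hget : w[j]? with _ | sym
          · -- reading the right end-marker (or beyond)
            rw [symbolAt_none w hp1 hget]
            have hjlen : w.length ≤ j := by
              by_contra hcon
              rw [List.getElem?_eq_getElem (by omega)] at hget
              exact absurd hget (by simp)
            have hw : l.1 = w := by
              rw [htake]; exact List.take_of_length_le (by omega)
            rcases hdec : decide (∃ x : Fin n → Bool, l.1 = encodePair n x x) with _ | _
            · refine Or.inl ?_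
              simp only [UBdelta, hdec]
              simp
            · refine Or.inr (Or.inl ⟨by simp [UBdelta, hdec], ?_⟩)
              obtain ⟨x, hx⟩ := of_decide_eq_true hdec
              exact ⟨x, x, by simp [EQfun], by rw [← hw, hx]⟩
          · -- reading an input symbol
            have hsym : TwoDFA.symbolAt w c.2 = Sum.inl sym := by
              rw [hpj]; exact TwoDFA.symbolAt_idx w hget
            rw [hsym]
            have hjlen : j < w.length := by
              by_contra hcon
              rw [List.getElem?_eq_none (by omega)] at hget
              exact absurd hget (by simp)
            have hlenl : l.1.length = j := by
              rw [htake, List.length_take]; omega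
            by_cases h3 : l.1.length < 3 * n
            · refine Or.inr (Or.inr ⟨⟨l.1 ++ [sym], by simp; omega⟩, by simp [UBdelta, h3],
                Or.inr ⟨by simp [UBdelta, h3]; omega, ?_⟩⟩)
              simp only [UBdelta, h3, dif_pos]
              have : (c.2 + 1).toNat - 1 = j + 1 := by omega
              rw [this, htake, List.take_succ, hget]
              simp
            · refine Or.inl ?_
              simp [UBdelta, h3]

-- UPPER BOUND : run lemma, recognition, bounds

lemma UBdelta_marker (n : ℕ) (l : UBSub n) (h : l.1 = []) :
    UBdelta n (Sum.inr l) (Sum.inr false) = (Sum.inr l, 1) := by simp [UBdelta, h]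

lemma UBdelta_sym (n : ℕ) (l : UBSub n) (s : Option Bool) (h : l.1.length < 3 * n) :
    UBdelta n (Sum.inr l) (Sum.inl s) = (Sum.inr ⟨l.1 ++ [s], by simp; omega⟩, 1) := by
  simp [UBdelta, h]

lemma UBdelta_end (n : ℕ) (l : UBSub n) :
    UBdelta n (Sum.inr l) (Sum.inr true) =
      (Sum.inl (decide (∃ x : Fin n → Bool, l.1 = encodePair n x x)), 0) := rfl

lemma UBM_conf_eq (n : ℕ) (w : List (Option Bool)) (hw : w.length ≤ 3 * n) :
    ∀ k, k ≤ w.length + 1 →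
      ∃ h : (w.take (k - 1)).length ≤ 3 * n,
        (UBM n).conf w k = ((UBe n) (Sum.inr ⟨w.take (k - 1), h⟩), (k : ℤ)) := by
  intro k
  induction k with
  | zero => intro _; exact ⟨by simp, rfl⟩
  | succ k ih =>
      intro hk
      have hk' : k ≤ w.length := by omega
      obtain ⟨hpk, ihk⟩ := ih (by omega)
      refine ⟨by rw [List.length_take]; omega, ?_⟩
      rw [conf_succ, UBM_step', ihk]
      simp only [Equiv.symm_apply_apply]
      rcases Nat.eq_zero_or_pos k with rfl | hkpos
      · rw [TwoDFA.symbolAt_nonpos w (by norm_num)]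
        rw [UBdelta_marker n _ (by simp)]
        simp [Prod.ext_iff]
        rfl
      · have hget : w[k - 1]? = some (w.get ⟨k - 1, by omega⟩) := by
          rw [List.getElem?_eq_getElem (by omega)]
          rfl
        have hsym : TwoDFA.symbolAt w (k : ℤ) = Sum.inl (w.get ⟨k - 1, by omega⟩) := by
          have h0 := TwoDFA.symbolAt_idx w hget
          rwa [show ((k - 1 : ℕ) : ℤ) + 1 = (k : ℤ) by omega] at h0
        rw [hsym]
        have hc : ((⟨w.take (k - 1), hpk⟩ : UBSub n)).1.length < 3 * n := by
          simp only [List.length_take]; omega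
        rw [UBdelta_sym n _ _ hc]
        have htake : w.take (k - 1) ++ [w.get ⟨k - 1, by omega⟩] = w.take (k + 1 - 1) := by
          rw [show k + 1 - 1 = (k - 1) + 1 by omega, List.take_succ,
            hget]
          rfl
        refine Prod.ext ?_ (show (k : ℤ) + 1 = ((k + 1 : ℕ) : ℤ) by push_cast; ring)
        show (UBe n) (Sum.inr ⟨(⟨w.take (k - 1), hpk⟩ : UBSub n).1 ++ [w.get ⟨k - 1, by omega⟩],
      by simp; omega⟩) = _
        exact congrArg _ (congrArg _ (Subtype.ext htake))

lemma UBM_accepts (n : ℕ) (x : Fin n → Bool) :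
    (((UBM n).conf (encodePair n x x) (3 * n + 2)).1) ∈ (UBM n).accept := by
  set w := encodePair n x x with hwdef
  have hlen : w.length = 3 * n := enc_length n x x
  obtain ⟨hp, h1⟩ := UBM_conf_eq n w (by omega) (3 * n + 1) (by omega)
  have h2 : (3 * n + 2) = (3 * n + 1) + 1 := by omega
  rw [h2, conf_succ, UBM_step', h1]
  simp only [Equiv.symm_apply_apply]
  have hsym : TwoDFA.symbolAt w ((3 * n + 1 : ℕ) : ℤ) = Sum.inr true :=
    TwoDFA.symbolAt_big w (by push_cast [hlen]; omega)
  rw [hsym, UBdelta_end]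
  have htk : ((⟨w.take (3 * n + 1 - 1), hp⟩ : UBSub n)).1 = w :=
    List.take_of_length_le (by omega)
  rw [htk]
  have hd : decide (∃ z : Fin n → Bool, w = encodePair n z z) = true :=
    decide_eq_true ⟨x, hwdef⟩
  rw [hd]
  show (UBe n) (Sum.inl true) ∈ (UBM n).accept
  exact Finset.mem_singleton_self _

lemma UBM_accept_imp_mem (n : ℕ) (w : List (Option Bool)) (k : ℕ)
    (h : ((UBM n).conf w k).1 ∈ (UBM n).accept) : w ∈ Lf n (EQfun n) := by
  have hacc : ((UBM n).conf w k).1 = (UBe n) (Sum.inl true) := by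
    exact Finset.mem_singleton.mp h
  have hsymm : (UBe n).symm (((UBM n).conf w k).1) = Sum.inl true := by
    rw [hacc, Equiv.symm_apply_apply]
  rcases UBInv_holds n w k with h1 | ⟨h1, h2⟩ | ⟨l, h1, _⟩
  · rw [hsymm] at h1; exact absurd h1 (by simp)
  · exact h2
  · rw [hsymm] at h1; exact absurd h1 (by simp)

lemma UBM_recognizes (n : ℕ) : (UBM n).Recognizes (Lf n (EQfun n)) (3 * n + 2) := by
  intro w
  constructor
  · constructor
    · rintro ⟨x, y, hxy, rfl⟩
      have hxy' : x = y := of_decide_eq_true hxy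
      subst hxy'
      exact ⟨3 * n + 2, le_rfl, UBM_accepts n x⟩
    · rintro ⟨k, -, hk⟩
      exact UBM_accept_imp_mem n w k hk
  · intro hw k hk
    exact hw (UBM_accept_imp_mem n w k hk)

lemma UBM_Q_le (n : ℕ) (hn : 1 ≤ n) : (UBM n).Q ≤ 2 ^ (7 * n) := by
  have h0 : (UBM n).Q = 2 + Fintype.card (UBSub n) := by
    show Fintype.card (UBS n) = _
    rw [Fintype.card_sum, Fintype.card_bool]
  have h1 : Fintype.card (UBSub n) ≤ 2 * 3 ^ (3 * n) - 1 := by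
    have := card_listLE_le (Option Bool) (3 * n) (by simp)
    simpa using this
  have h2 : (3 : ℕ) ^ (3 * n) ≤ 2 ^ (5 * n) := by
    calc (3 : ℕ) ^ (3 * n) = 27 ^ n := by rw [pow_mul]; norm_num
    _ ≤ 32 ^ n := Nat.pow_le_pow_left (by norm_num) n
    _ = 2 ^ (5 * n) := by rw [pow_mul]; norm_num
  have h3 : 2 ^ (5 * n + 2) ≤ 2 ^ (7 * n) := Nat.pow_le_pow_right (by norm_num) (by omega)
  have h4 : 2 ^ (5 * n + 2) = 4 * 2 ^ (5 * n) := by rw [pow_add]; ring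
  have h5 : 1 ≤ (3:ℕ) ^ (3 * n) := Nat.one_le_pow _ _ (by norm_num)
  omega

lemma UBM_TS_le (n : ℕ) (hn : 1 ≤ n) :
    (UBM n).TS (3 * n + 2) ≤ (100 : ℝ) * (n : ℝ) ^ 2 := by
  have hQ1 : 1 ≤ (UBM n).Q := (UBM n).hQ
  have hQle : (UBM n).Q ≤ 2 ^ (7 * n) := UBM_Q_le n hn
  have hL : Real.logb 2 ((UBM n).Q : ℝ) ≤ ((7 * n : ℕ) : ℝ) := by
    have h1 : Real.logb 2 ((UBM n).Q : ℝ) ≤ Real.logb 2 ((2 : ℝ) ^ (7 * n)) := by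
      apply Real.logb_le_logb_of_le (by norm_num) (by exact_mod_cast hQ1)
      exact_mod_cast hQle
    rwa [Real.logb_pow, Real.logb_self_eq_one (by norm_num : (1:ℝ) < 2), mul_one] at h1
  have hL0 : 0 ≤ Real.logb 2 ((UBM n).Q : ℝ) := Real.logb_nonneg (by norm_num)
    (by exact_mod_cast hQ1)
  unfold TwoDFA.TS
  have hn' : (1 : ℝ) ≤ (n : ℝ) := by exact_mod_cast hn
  calc ((3 * n + 2 : ℕ) : ℝ) * Real.logb 2 ((UBM n).Q : ℝ)
      ≤ ((3 * n + 2 : ℕ) : ℝ) * ((7 * n : ℕ) : ℝ) := by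
        apply mul_le_mul_of_nonneg_left hL (by positivity)
    _ ≤ (100 : ℝ) * (n : ℝ) ^ 2 := by push_cast; nlinarith

-- LOWER BOUND : crossing machinery

section LB

variable {α : Type}

def own (M : TwoDFA α) (n : ℕ) (w : List α) : ℕ → Bool
  | 0 => true
  | k+1 =>
      if own M n w k then
        (if 2*(n:ℤ)+1 ≤ (M.conf w (k+1)).2 then false else true)
      else
        (if (M.conf w (k+1)).2 ≤ (n:ℤ) then true else false)

def trcount (M : TwoDFA α) (n : ℕ) (w : List α) : ℕ → ℕ
  | 0 => 0
  | k+1 => trcount M n w k + (if own M n w (k+1) = own M n w k then 0 else 1)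

def trseq (M : TwoDFA α) (n : ℕ) (w : List α) : ℕ → List (Fin M.Q)
  | 0 => []
  | k+1 => trseq M n w k ++
      (if own M n w (k+1) = own M n w k then [] else [(M.conf w (k+1)).1])

variable (M : TwoDFA α) (n : ℕ) (w : List α)

lemma conf_zero : M.conf w 0 = (M.init, 0) := rfl

lemma pos_step (k : ℕ) : ((M.conf w (k+1)).2 - (M.conf w k).2).natAbs ≤ 1 := by
  have h : (M.conf w (k+1)).2
      = (M.conf w k).2 + (M.δ (M.conf w k).1 (TwoDFA.symbolAt w (M.conf w k).2)).2 := by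
    rw [conf_succ]; rfl
  rw [h, add_sub_cancel_left]
  exact M.hmove _ _

lemma pos_step' (k : ℕ) : (M.conf w k).2 - 1 ≤ (M.conf w (k+1)).2 ∧
    (M.conf w (k+1)).2 ≤ (M.conf w k).2 + 1 := by
  have := pos_step M w k; omega

lemma own_bound : ∀ k, (own M n w k = true → (M.conf w k).2 ≤ 2*(n:ℤ)) ∧
    (own M n w k = false → (n:ℤ)+1 ≤ (M.conf w k).2) := by
  intro k
  induction k with
  | zero =>
      constructor
      · intro _; rw [conf_zero]; simp
      · intro h; simp [own] at h
  | succ k ih =>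
      have hs := pos_step' M w k
      by_cases ho : own M n w k
      · have h1 := ih.1 ho
        by_cases hp : 2*(n:ℤ)+1 ≤ (M.conf w (k+1)).2
        · have : own M n w (k+1) = false := by simp [own, ho, hp]
          rw [this]; constructor
          · intro h; exact absurd h (by simp)
          · intro _; omega
        · have : own M n w (k+1) = true := by simp [own, ho, hp]
          rw [this]; constructor
          · intro _; omega
          · intro h; exact absurd h (by simp)
      · have ho' : own M n w k = false := by simpa using ho
        have h1 := ih.2 ho'
        by_cases hp : (M.conf w (k+1)).2 ≤ (n:ℤ)
        · have : own M n w (k+1) = true := by simp [own, ho, hp]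
          rw [this]; constructor
          · intro _; omega
          · intro h; exact absurd h (by simp)
        · have : own M n w (k+1) = false := by simp [own, ho, hp]
          rw [this]; constructor
          · intro h; exact absurd h (by simp)
          · intro _; omega

lemma transfer_pos (k : ℕ) (h : own M n w (k+1) ≠ own M n w k) :
    (own M n w k = true → (M.conf w (k+1)).2 = 2*(n:ℤ)+1 ∧ (M.conf w k).2 = 2*(n:ℤ)) ∧
    (own M n w k = false → (M.conf w (k+1)).2 = (n:ℤ) ∧ (M.conf w k).2 = (n:ℤ)+1) := by
  have hs := pos_step' M w k
  constructor
  · intro ho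
    have h1 := (own_bound M n w k).1 ho
    have hp : 2*(n:ℤ)+1 ≤ (M.conf w (k+1)).2 := by
      by_contra hp
      exact h (by simp [own, ho, hp])
    constructor <;> omega
  · intro ho
    have h1 := (own_bound M n w k).2 ho
    have hp : (M.conf w (k+1)).2 ≤ (n:ℤ) := by
      by_contra hp
      refine h ?_
      simp [own, ho, hp]
    constructor <;> omega

/-- The distance-to-handoff potential. -/
noncomputable def hdist (k : ℕ) : ℤ :=
  if own M n w k then 2*(n:ℤ)+1 - (M.conf w k).2 else (M.conf w k).2 - (n:ℤ)

lemma pot (k : ℕ) :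
    ((n:ℤ)+1) * (trcount M n w k) - hdist M n w k ≤ (k:ℤ) - (2*(n:ℤ)+1) := by
  induction k with
  | zero =>
      have h0 : own M n w 0 = true := rfl
      have h1 : hdist M n w 0 = 2*(n:ℤ)+1 := by
        simp [hdist, h0, conf_zero]
      rw [h1]
      simp [trcount]
  | succ k ih =>
      have hs := pos_step' M w k
      by_cases ht : own M n w (k+1) = own M n w k
      · have hc : trcount M n w (k+1) = trcount M n w k := by simp [trcount, ht]
        have hd : hdist M n w k - 1 ≤ hdist M n w (k+1) := by
          unfold hdist
          rw [ht]
          by_cases ho : own M n w k <;> simp [ho] <;> omega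
        rw [hc]
        push_cast
        push_cast at ih
        linarith
      · have hc : trcount M n w (k+1) = trcount M n w k + 1 := by simp [trcount, ht]
        have htp := transfer_pos M n w k ht
        rcases Bool.eq_false_or_eq_true (own M n w k) with ho | ho
        · -- own k = true
          obtain ⟨hp1, hp2⟩ := htp.1 ho
          have ho' : own M n w (k+1) = false := by
            rcases Bool.eq_false_or_eq_true (own M n w (k+1)) with h' | h'
            · exact absurd (h'.trans ho.symm) ht
            · exact h'
          have hd : hdist M n w k = 1 := by
            simp only [hdist, ho, if_pos, hp2]; ring
          have hd' : hdist M n w (k+1) = (n:ℤ)+1 := by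
            simp only [hdist, ho', Bool.false_eq_true, if_false, hp1]; ring
          rw [hc, hd']
          rw [hd] at ih
          push_cast
          push_cast at ih
          linarith
        · -- own k = false
          obtain ⟨hp1, hp2⟩ := htp.2 ho
          have ho' : own M n w (k+1) = true := by
            rcases Bool.eq_false_or_eq_true (own M n w (k+1)) with h' | h'
            · exact h'
            · exact absurd (h'.trans ho.symm) ht
          have hd : hdist M n w k = 1 := by
            simp only [hdist, ho, Bool.false_eq_true, if_false, hp2]; ring
          have hd' : hdist M n w (k+1) = (n:ℤ)+1 := by
            simp only [hdist, ho', if_pos, hp1]; ring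
          rw [hc, hd']
          rw [hd] at ih
          push_cast
          push_cast at ih
          linarith

-- LOWER BOUND machinery, part 2

lemma trcount_time (k : ℕ) :
    trcount M n w k = 0 ∨ (n+1) * trcount M n w k + n ≤ k := by
  induction k with
  | zero => left; rfl
  | succ k ih =>
      by_cases ht : own M n w (k+1) = own M n w k
      · have hc : trcount M n w (k+1) = trcount M n w k := by simp [trcount, ht]
        rw [hc]
        rcases ih with h | h
        · left; exact h
        · right; omega
      · right
        have hc : trcount M n w (k+1) = trcount M n w k + 1 := by simp [trcount, ht]
        have hpot := pot M n w k
        have htp := transfer_pos M n w k ht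
        have hd : hdist M n w k = 1 := by
          rcases Bool.eq_false_or_eq_true (own M n w k) with ho | ho
          · obtain ⟨hp1, hp2⟩ := htp.1 ho
            simp [hdist, ho, hp2]
          · obtain ⟨hp1, hp2⟩ := htp.2 ho
            simp [hdist, ho, hp2]
        rw [hd] at hpot
        rw [hc]
        have : ((n:ℤ)+1) * (trcount M n w k + 1 : ℕ) + n ≤ (k:ℤ) + 1 := by
          push_cast
          push_cast at hpot
          linarith
        exact_mod_cast this
  
lemma trcount_mono : Monotone (trcount M n w) := by
  apply monotone_nat_of_le_succ
  intro k
  simp only [trcount]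
  omega

lemma trcount_succ_le (k : ℕ) : trcount M n w (k+1) ≤ trcount M n w k + 1 := by
  simp only [trcount]
  split <;> omega

lemma own_even (k : ℕ) : own M n w k = true ↔ Even (trcount M n w k) := by
  induction k with
  | zero => simp [own, trcount]
  | succ k ih =>
      by_cases ht : own M n w (k+1) = own M n w k
      · have hc : trcount M n w (k+1) = trcount M n w k := by simp [trcount, ht]
        rw [hc, ht]; exact ih
      · have hc : trcount M n w (k+1) = trcount M n w k + 1 := by simp [trcount, ht]
        rw [hc, Nat.even_add_one]
        rcases Bool.eq_false_or_eq_true (own M n w k) with ho | ho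
        · have ho' : own M n w (k+1) = false := by
            rcases Bool.eq_false_or_eq_true (own M n w (k+1)) with h' | h'
            · exact absurd (h'.trans ho.symm) ht
            · exact h'
          rw [ho']
          simp [ih.mp ho]
        · have ho' : own M n w (k+1) = true := by
            rcases Bool.eq_false_or_eq_true (own M n w (k+1)) with h' | h'
            · exact h'
            · exact absurd (h'.trans ho.symm) ht
          rw [ho']
          simp only [true_iff]
          intro hcon
          exact absurd (ih.mpr hcon) (by simp [ho])

lemma trseq_length (k : ℕ) : (trseq M n w k).length = trcount M n w k := by
  induction k with
  | zero => rfl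
  | succ k ih =>
      simp only [trseq, trcount]
      split <;> simp [ih]

/-- Time of the `j`-th transfer. -/
noncomputable def tau (j : ℕ) : ℕ := sInf {t | j ≤ trcount M n w t}

lemma tau_le {j K : ℕ} (hJ : j ≤ trcount M n w K) : tau M n w j ≤ K := Nat.sInf_le hJ

lemma trcount_tau {j K : ℕ} (hJ : j ≤ trcount M n w K) :
    trcount M n w (tau M n w j) = j := by
  have hne : {t | j ≤ trcount M n w t}.Nonempty := ⟨K, hJ⟩
  have hmem : j ≤ trcount M n w (tau M n w j) := Nat.sInf_mem hne
  rcases Nat.eq_zero_or_pos (tau M n w j) with h0 | hpos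
  · have h00 : trcount M n w 0 = 0 := rfl
    rw [h0] at hmem ⊢
    omega
  · have hlt : ¬ (j ≤ trcount M n w (tau M n w j - 1)) := by
      intro hcon
      have hmem2 : (tau M n w j - 1) ∈ {t | j ≤ trcount M n w t} := hcon
      exact absurd (Nat.sInf_le hmem2)
        (not_le.mpr (by omega : tau M n w j - 1 < tau M n w j))
    have hstep : trcount M n w ((tau M n w j - 1) + 1) ≤ trcount M n w (tau M n w j - 1) + 1 :=
      trcount_succ_le M n w _
    rw [show (tau M n w j - 1) + 1 = tau M n w j by omega] at hstep
    omega

lemma tau_transfer {j K : ℕ} (hj : 1 ≤ j) (hJ : j ≤ trcount M n w K) :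
    1 ≤ tau M n w j ∧ own M n w (tau M n w j) ≠ own M n w (tau M n w j - 1) := by
  have h1 : trcount M n w (tau M n w j) = j := trcount_tau M n w hJ
  have hpos : 1 ≤ tau M n w j := by
    rcases Nat.eq_zero_or_pos (tau M n w j) with h0 | h
    · exfalso
      have h00 : trcount M n w 0 = 0 := rfl
      rw [h0] at h1
      omega
    · exact h
  refine ⟨hpos, ?_⟩
  have hlt : ¬ (j ≤ trcount M n w (tau M n w j - 1)) := by
    intro hcon
    have hmem2 : (tau M n w j - 1) ∈ {t | j ≤ trcount M n w t} := hcon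
    exact absurd (Nat.sInf_le hmem2)
      (not_le.mpr (by omega : tau M n w j - 1 < tau M n w j))
  intro hcon
  obtain ⟨t, ht⟩ : ∃ t, tau M n w j = t + 1 := ⟨tau M n w j - 1, by omega⟩
  rw [ht] at hcon h1 hlt
  simp only [Nat.add_sub_cancel] at hcon hlt
  have hct : trcount M n w (t+1) = trcount M n w t := by simp [trcount, hcon]
  omega

lemma tau_zero : tau M n w 0 = 0 :=
  Nat.eq_zero_of_le_zero (Nat.sInf_le (by simp))

lemma trseq_get (k j : ℕ) (hj : j < trcount M n w k) :
    (trseq M n w k)[j]? = some ((M.conf w (tau M n w (j+1))).1) := by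
  induction k with
  | zero => exact absurd hj (by simp [trcount])
  | succ k ih =>
      by_cases ht : own M n w (k+1) = own M n w k
      · have hc : trcount M n w (k+1) = trcount M n w k := by simp [trcount, ht]
        have hs : trseq M n w (k+1) = trseq M n w k := by simp [trseq, ht]
        rw [hs]
        exact ih (by omega)
      · have hc : trcount M n w (k+1) = trcount M n w k + 1 := by simp [trcount, ht]
        have hs : trseq M n w (k+1) = trseq M n w k ++ [(M.conf w (k+1)).1] := by
          simp [trseq, ht]
        rw [hs]
        rcases Nat.lt_or_ge j (trcount M n w k) with hlt | hge
        · rw [List.getElem?_append_left (by rw [trseq_length]; exact hlt)]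
          exact ih hlt
        · have hj' : j = trcount M n w k := by omega
          have htau : tau M n w (j+1) = k+1 := by
            apply le_antisymm
            · exact Nat.sInf_le (by simp [hc, hj'])
            · apply le_csInf ⟨k+1, by simp [hc, hj']⟩
              intro t htmem
              by_contra hcon
              push_neg at hcon
              have hmono : trcount M n w t ≤ trcount M n w k :=
                trcount_mono M n w (by omega)
              have : j + 1 ≤ trcount M n w t := htmem
              omega
          subst hj'
          rw [htau, ← trseq_length M n w k, List.getElem?_concat_length]
  
lemma conf_add (a u : ℕ) : M.conf w (a + u) = (M.step w)^[u] (M.conf w a) := by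
  rw [add_comm]
  exact Function.iterate_add_apply _ _ _ _

lemma phase_agree_A (M : TwoDFA α) (n : ℕ) (w w₁ : List α)
    (hagree : ∀ p : ℤ, p ≤ 2*(n:ℤ) → TwoDFA.symbolAt w p = TwoDFA.symbolAt w₁ p)
    (c : Fin M.Q × ℤ) (m : ℕ)
    (hpos : ∀ u < m, (((M.step w₁)^[u]) c).2 ≤ 2*(n:ℤ)) :
    ((M.step w)^[m]) c = ((M.step w₁)^[m]) c := by
  induction m with
  | zero => rfl
  | succ m ih =>
      rw [Function.iterate_succ_apply', Function.iterate_succ_apply']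
      rw [ih (fun u hu => hpos u (by omega))]
      set c' := ((M.step w₁)^[m]) c
      unfold TwoDFA.step
      rw [hagree c'.2 (hpos m (by omega))]

lemma phase_agree_B (M : TwoDFA α) (n : ℕ) (w w₂ : List α)
    (hagree : ∀ p : ℤ, (n:ℤ)+1 ≤ p → TwoDFA.symbolAt w p = TwoDFA.symbolAt w₂ p)
    (c : Fin M.Q × ℤ) (m : ℕ)
    (hpos : ∀ u < m, (((M.step w₂)^[u]) c).2 ≥ (n:ℤ)+1) :
    ((M.step w)^[m]) c = ((M.step w₂)^[m]) c := by
  induction m with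
  | zero => rfl
  | succ m ih =>
      rw [Function.iterate_succ_apply', Function.iterate_succ_apply']
      rw [ih (fun u hu => hpos u (by omega))]
      set c' := ((M.step w₂)^[m]) c
      unfold TwoDFA.step
      rw [hagree c'.2 (hpos m (by omega))]

end LB

-- LOWER BOUND : gluing lemma

section Glue

variable {α : Type}

lemma run_agree_A (M : TwoDFA α) (n : ℕ) (w w₁ : List α)
    (hA : ∀ p : ℤ, p ≤ 2*(n:ℤ) → TwoDFA.symbolAt w p = TwoDFA.symbolAt w₁ p)
    (a b : ℕ) (hab : a ≤ b)
    (hown : ∀ t, a ≤ t → t < b → own M n w₁ t = true) :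
    ((M.step w)^[b - a]) (M.conf w₁ a) = M.conf w₁ b := by
  have h1 : ∀ u, u < b - a → (((M.step w₁)^[u]) (M.conf w₁ a)).2 ≤ 2*(n:ℤ) := by
    intro u hu
    rw [← conf_add]
    exact (own_bound M n w₁ (a+u)).1 (hown (a+u) (by omega) (by omega))
  rw [phase_agree_A M n w w₁ hA _ (b-a) h1, ← conf_add,
    (by omega : a + (b - a) = b)]

lemma run_agree_B (M : TwoDFA α) (n : ℕ) (w w₂ : List α)
    (hB : ∀ p : ℤ, (n:ℤ)+1 ≤ p → TwoDFA.symbolAt w p = TwoDFA.symbolAt w₂ p)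
    (a b : ℕ) (hab : a ≤ b)
    (hown : ∀ t, a ≤ t → t < b → own M n w₂ t = false) :
    ((M.step w)^[b - a]) (M.conf w₂ a) = M.conf w₂ b := by
  have h1 : ∀ u, u < b - a → (((M.step w₂)^[u]) (M.conf w₂ a)).2 ≥ (n:ℤ)+1 := by
    intro u hu
    rw [← conf_add]
    exact (own_bound M n w₂ (a+u)).2 (hown (a+u) (by omega) (by omega))
  rw [phase_agree_B M n w w₂ hB _ (b-a) h1, ← conf_add,
    (by omega : a + (b - a) = b)]

/-- `trcount` is constant (equal to `j`) strictly between consecutive transfers. -/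
lemma trcount_between (M : TwoDFA α) (n : ℕ) (v : List α) {j K : ℕ}
    (hJ : j ≤ trcount M n v K) (t : ℕ) (h1 : tau M n v j ≤ t) (h2 : t < tau M n v (j+1)) :
    trcount M n v t = j := by
  have ha : j ≤ trcount M n v t := by
    have := trcount_mono M n v h1
    rw [trcount_tau M n v hJ] at this
    exact this
  have hb : ¬ (j+1 ≤ trcount M n v t) := by
    intro hcon
    have hmem : t ∈ {s | j+1 ≤ trcount M n v s} := hcon
    have hle : tau M n v (j+1) ≤ t := Nat.sInf_le hmem
    omega
  omega

/-- `trcount` is constant (equal to its final value) after the last transfer. -/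
lemma trcount_tail (M : TwoDFA α) (n : ℕ) (v : List α) (K : ℕ) (t : ℕ)
    (h1 : tau M n v (trcount M n v K) ≤ t) (h2 : t ≤ K) :
    trcount M n v t = trcount M n v K := by
  have ha := trcount_mono M n v h1
  rw [trcount_tau M n v (le_refl _)] at ha
  have hb := trcount_mono M n v h2
  omega

/-- Position at a transfer time, determined by the parity of the transfer index. -/
lemma transfer_position (M : TwoDFA α) (n : ℕ) (v : List α) {j K : ℕ}
    (hj : j + 1 ≤ trcount M n v K) :
    (M.conf v (tau M n v (j+1))).2 = (if Even j then 2*(n:ℤ)+1 else (n:ℤ)) := by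
  obtain ⟨hpos, hne⟩ := tau_transfer M n v (by omega : 1 ≤ j+1) hj
  obtain ⟨t, ht⟩ : ∃ t, tau M n v (j+1) = t + 1 := ⟨tau M n v (j+1) - 1, by omega⟩
  have hmono : tau M n v j ≤ tau M n v (j+1) := by
    have hmem : tau M n v (j+1) ∈ {s | j ≤ trcount M n v s} := by
      have := trcount_tau M n v hj
      simp only [Set.mem_setOf_eq, this]
      omega
    exact Nat.sInf_le hmem
  have hstrict : tau M n v j < tau M n v (j+1) := by
    rcases lt_or_eq_of_le hmono with h | h
    · exact h
    · exfalso
      have e1 := trcount_tau M n v hj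
      have e2 := trcount_tau M n v (show j ≤ trcount M n v K by omega)
      rw [h] at e2
      omega
  have hcnt : trcount M n v t = j :=
    trcount_between M n v (show j ≤ trcount M n v K by omega) t (by omega) (by omega)
  have hne' : own M n v (t+1) ≠ own M n v t := by
    rw [ht] at hne
    simpa using hne
  have htp := transfer_pos M n v t hne'
  rcases Nat.even_or_odd j with hev | hodd
  · have hownt : own M n v t = true := (own_even M n v t).mpr (hcnt ▸ hev)
    rw [if_pos hev, ht]
    exact (htp.1 hownt).1
  · have hownt : own M n v t = false := by
      rcases Bool.eq_false_or_eq_true (own M n v t) with h | h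
      · exact absurd ((own_even M n v t).mp h) (by rw [hcnt]; exact Nat.not_even_iff_odd.mpr hodd)
      · exact h
    rw [if_neg (Nat.not_even_iff_odd.mpr hodd), ht]
    exact (htp.2 hownt).1

lemma glue (M : TwoDFA α) (n : ℕ) (w w₁ w₂ : List α)
    (hA : ∀ p : ℤ, p ≤ 2*(n:ℤ) → TwoDFA.symbolAt w p = TwoDFA.symbolAt w₁ p)
    (hB : ∀ p : ℤ, (n:ℤ)+1 ≤ p → TwoDFA.symbolAt w p = TwoDFA.symbolAt w₂ p)
    (k₁ k₂ : ℕ)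
    (hacc1 : (M.conf w₁ k₁).1 ∈ M.accept)
    (hacc2 : (M.conf w₂ k₂).1 ∈ M.accept)
    (hseq : trseq M n w₁ k₁ = trseq M n w₂ k₂) :
    ∃ m, (M.conf w m).1 ∈ M.accept := by
  set r := trcount M n w₁ k₁ with hrdef
  have hr2 : trcount M n w₂ k₂ = r := by
    rw [← trseq_length, ← hseq, trseq_length]
  -- owner during a phase of run 1
  have hown1 : ∀ j, j + 1 ≤ r → ∀ t, tau M n w₁ j ≤ t → t < tau M n w₁ (j+1) →
      (own M n w₁ t = true ↔ Even j) := by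
    intro j hj t h1 h2
    rw [own_even, trcount_between M n w₁ (show j ≤ trcount M n w₁ k₁ by omega) t h1 h2]
  have hown2 : ∀ j, j + 1 ≤ r → ∀ t, tau M n w₂ j ≤ t → t < tau M n w₂ (j+1) →
      (own M n w₂ t = true ↔ Even j) := by
    intro j hj t h1 h2
    rw [own_even, trcount_between M n w₂ (show j ≤ trcount M n w₂ k₂ by omega) t h1 h2]
  -- the inductive synchronisation
  have key : ∀ j, j ≤ r → ∃ m, M.conf w m = M.conf w₁ (tau M n w₁ j) ∧
      M.conf w₁ (tau M n w₁ j) = M.conf w₂ (tau M n w₂ j) := by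
    intro j
    induction j with
    | zero =>
        intro _
        exact ⟨0, by rw [tau_zero, conf_zero, conf_zero], by rw [tau_zero, tau_zero,
          conf_zero, conf_zero]⟩
    | succ j ih =>
        intro hj1
        obtain ⟨m, hm1, hm2⟩ := ih (by omega)
        have hj1' : j + 1 ≤ trcount M n w₁ k₁ := hj1
        have hj2' : j + 1 ≤ trcount M n w₂ k₂ := by omega
        -- states at the (j+1)-st transfer agree
        have hget1 := trseq_get M n w₁ k₁ j (by omega)
        have hget2 := trseq_get M n w₂ k₂ j (by omega)
        rw [hseq] at hget1
        rw [hget1] at hget2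
        have hstate := Option.some.inj hget2
        -- positions at the (j+1)-st transfer agree
        have hpos1 := transfer_position M n w₁ hj1'
        have hpos2 := transfer_position M n w₂ hj2'
        have hsecond : M.conf w₁ (tau M n w₁ (j+1)) = M.conf w₂ (tau M n w₂ (j+1)) :=
          Prod.ext hstate (by rw [hpos1, hpos2])
        -- strictness and monotonicity of tau on run 1 and run 2
        have hmono1 : tau M n w₁ j ≤ tau M n w₁ (j+1) := by
          have hmem : tau M n w₁ (j+1) ∈ {s | j ≤ trcount M n w₁ s} := by
            have := trcount_tau M n w₁ hj1'
            simp only [Set.mem_setOf_eq, this]; omega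
          exact Nat.sInf_le hmem
        have hmono2 : tau M n w₂ j ≤ tau M n w₂ (j+1) := by
          have hmem : tau M n w₂ (j+1) ∈ {s | j ≤ trcount M n w₂ s} := by
            have := trcount_tau M n w₂ hj2'
            simp only [Set.mem_setOf_eq, this]; omega
          exact Nat.sInf_le hmem
        rcases Nat.even_or_odd j with hev | hodd
        · -- A-phase: follow run 1
          refine ⟨m + (tau M n w₁ (j+1) - tau M n w₁ j), ?_, hsecond⟩
          rw [conf_add, hm1]
          exact run_agree_A M n w w₁ hA _ _ hmono1
            (fun t h1 h2 => (hown1 j hj1 t h1 h2).mpr hev)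
        · -- B-phase: follow run 2
          refine ⟨m + (tau M n w₂ (j+1) - tau M n w₂ j), ?_, hsecond⟩
          rw [conf_add, hm1, hm2]
          have hrun := run_agree_B M n w w₂ hB _ _ hmono2 (fun t h1 h2 => by
            have hiff := hown2 j hj1 t h1 h2
            rcases Bool.eq_false_or_eq_true (own M n w₂ t) with h | h
            · exact absurd (hiff.mp h) (Nat.not_even_iff_odd.mpr hodd)
            · exact h)
          rw [hrun]
          exact hsecond.symm
  -- from the last transfer to acceptance
  obtain ⟨m, hm1, hm2⟩ := key r le_rfl
  rcases Nat.even_or_odd r with hev | hodd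
  · have htau1 : tau M n w₁ r ≤ k₁ := tau_le M n w₁ le_rfl
    refine ⟨m + (k₁ - tau M n w₁ r), ?_⟩
    have hrun := run_agree_A M n w w₁ hA _ _ htau1 (fun t h1 h2 => by
      have hc : trcount M n w₁ t = r := trcount_tail M n w₁ k₁ t h1 (by omega)
      exact (own_even M n w₁ t).mpr (hc ▸ hev))
    rw [conf_add, hm1, hrun]
    exact hacc1
  · have htau2 : tau M n w₂ r ≤ k₂ := tau_le M n w₂ hr2.ge
    refine ⟨m + (k₂ - tau M n w₂ r), ?_⟩
    have hrun := run_agree_B M n w w₂ hB _ _ htau2 (fun t h1 h2 => by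
      have hc : trcount M n w₂ t = r := by
        have := trcount_tail M n w₂ k₂ t (by rw [hr2]; exact h1) (by omega)
        rw [this, hr2]
      rcases Bool.eq_false_or_eq_true (own M n w₂ t) with h | h
      · exact absurd ((own_even M n w₂ t).mp h) (by rw [hc]; exact Nat.not_even_iff_odd.mpr hodd)
      · exact h)
    rw [conf_add, hm1, hm2, hrun]
    exact hacc2

end Glue

-- LOWER BOUND : counting argument and final theorem

lemma agree_A (n : ℕ) (x y y' : Fin n → Bool) :
    ∀ p : ℤ, p ≤ 2*(n:ℤ) →
      TwoDFA.symbolAt (encodePair n x y) p = TwoDFA.symbolAt (encodePair n x y') p := by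
  intro p hp
  rcases le_or_gt p 0 with h0 | h0
  · rw [TwoDFA.symbolAt_nonpos _ h0, TwoDFA.symbolAt_nonpos _ h0]
  · apply TwoDFA.symbolAt_eq_of
    · rw [enc_length, enc_length]
    · set j := p.toNat - 1 with hj
      have hjlt : j < 2 * n := by omega
      rw [enc_get?, enc_get?]
      by_cases h1 : j < n
      · simp [h1]
      · simp [h1, hjlt]

lemma agree_B (n : ℕ) (x x' y : Fin n → Bool) :
    ∀ p : ℤ, (n:ℤ)+1 ≤ p →
      TwoDFA.symbolAt (encodePair n x y) p = TwoDFA.symbolAt (encodePair n x' y) p := by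
  intro p hp
  rcases le_or_gt (3*(n:ℤ)+1) p with h3 | h3
  · rw [TwoDFA.symbolAt_big _ (by rw [enc_length]; push_cast; omega),
      TwoDFA.symbolAt_big _ (by rw [enc_length]; push_cast; omega)]
  · apply TwoDFA.symbolAt_eq_of
    · rw [enc_length, enc_length]
    · set j := p.toNat - 1 with hj
      have hjge : ¬ j < n := by omega
      rw [enc_get?, enc_get?]
      simp [hjge]

lemma two_le_Q (n : ℕ) (hn : 1 ≤ n) (M : TwoDFA (Option Bool)) (T : ℕ)
    (hrec : M.Recognizes (Lf n (EQfun n)) T) : 2 ≤ M.Q := by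
  by_contra hcon
  have hQ1 : M.Q = 1 := by have := M.hQ; omega
  set x0 : Fin n → Bool := fun _ => false with hx0
  have hmem : encodePair n x0 x0 ∈ Lf n (EQfun n) := (mem_Lf_iff n x0 x0).mpr rfl
  obtain ⟨k, hk, hacc⟩ := (hrec (encodePair n x0 x0)).1.mp hmem
  have hnil : ([] : List (Option Bool)) ∉ Lf n (EQfun n) := by
    rintro ⟨x, y, -, h⟩
    have := congrArg List.length h
    rw [enc_length] at this
    simp at this
    omega
  have hall : ∀ q q' : Fin M.Q, q = q' := by
    intro q q'
    apply Fin.ext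
    have h1 := q.isLt
    have h2 := q'.isLt
    omega
  have hEq : (M.conf [] 0).1 = (M.conf (encodePair n x0 x0) k).1 := hall _ _
  exact (hrec []).2 hnil 0 (hEq ▸ hacc)

theorem EQ_lower_bound (n : ℕ) (hn : 1 ≤ n) (M : TwoDFA (Option Bool)) (T : ℕ)
    (hrec : M.Recognizes (Lf n (EQfun n)) T) : (n:ℝ)^2 ≤ M.TS T := by
  classical
  set R := (T - n) / (n + 1) with hR
  have hchoice : ∀ x : Fin n → Bool, ∃ k, k ≤ T ∧ (M.conf (encodePair n x x) k).1 ∈ M.accept := by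
    intro x
    obtain ⟨k, hk1, hk2⟩ := (hrec (encodePair n x x)).1.mp ((mem_Lf_iff n x x).mpr rfl)
    exact ⟨k, hk1, hk2⟩
  choose k hkT hkacc using hchoice
  have hlen : ∀ x : Fin n → Bool,
      (trseq M n (encodePair n x x) (k x)).length ≤ R := by
    intro x
    rw [trseq_length]
    rcases trcount_time M n (encodePair n x x) (k x) with h | h
    · rw [h]; exact Nat.zero_le _
    · rw [hR]
      rw [Nat.le_div_iff_mul_le (by omega : 0 < n + 1), mul_comm]
      have := hkT x
      omega
  set F : (Fin n → Bool) → {l : List (Fin M.Q) // l.length ≤ R} :=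
    fun x => ⟨trseq M n (encodePair n x x) (k x), hlen x⟩ with hF
  have hFinj : Function.Injective F := by
    intro x x' hFeq
    by_contra hne
    have hseq : trseq M n (encodePair n x x) (k x)
        = trseq M n (encodePair n x' x') (k x') := congrArg Subtype.val hFeq
    obtain ⟨m, hm⟩ := glue M n (encodePair n x x') (encodePair n x x) (encodePair n x' x')
      (agree_A n x x' x) (agree_B n x x' x') (k x) (k x') (hkacc x) (hkacc x') hseq
    have hnotmem : encodePair n x x' ∉ Lf n (EQfun n) := by
      intro hmem
      exact hne ((mem_Lf_iff n x x').mp hmem)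
    exact (hrec (encodePair n x x')).2 hnotmem m hm
  have hQ2 : 2 ≤ M.Q := two_le_Q n hn M T hrec
  have hcard : 2 ^ n ≤ 2 * M.Q ^ R - 1 := by
    calc 2 ^ n = Fintype.card (Fin n → Bool) := by simp
    _ ≤ Fintype.card {l : List (Fin M.Q) // l.length ≤ R} :=
        Fintype.card_le_of_injective F hFinj
    _ ≤ 2 * (Fintype.card (Fin M.Q)) ^ R - 1 := card_listLE_le _ R (by simpa)
    _ = 2 * M.Q ^ R - 1 := by simp
  have hlt : 2 ^ (n - 1) < M.Q ^ R := by
    have h1 : (2:ℕ) ^ n = 2 * 2 ^ (n - 1) := by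
      rw [show n = 1 + (n - 1) by omega, pow_add]
      simp [show 1 + (n-1) - 1 = n - 1 by omega]
    have h2 : 1 ≤ M.Q ^ R := Nat.one_le_pow _ _ (by omega)
    omega
  set L := Real.logb 2 (M.Q : ℝ) with hL
  have hL1 : (1:ℝ) ≤ L := by
    have h2Q : (2:ℝ) ≤ (M.Q : ℝ) := by exact_mod_cast hQ2
    have := Real.logb_le_logb_of_le (by norm_num : (1:ℝ) < 2) (by norm_num : (0:ℝ) < 2) h2Q
    rwa [Real.logb_self_eq_one (by norm_num : (1:ℝ) < 2)] at this
  have hlog : ((n:ℝ) - 1) < (R:ℝ) * L := by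
    have hpos : (0:ℝ) < (((2:ℕ) ^ (n-1) : ℕ) : ℝ) := by positivity
    have hcast : (((2:ℕ) ^ (n-1) : ℕ) : ℝ) < ((M.Q ^ R : ℕ) : ℝ) := by exact_mod_cast hlt
    have h2 := Real.logb_lt_logb (b := 2) (by norm_num) hpos hcast
    rw [show (((2:ℕ) ^ (n-1) : ℕ) : ℝ) = (2:ℝ) ^ (n-1) by push_cast; ring,
      show ((M.Q ^ R : ℕ) : ℝ) = ((M.Q : ℕ) : ℝ) ^ R by push_cast; ring,
      Real.logb_pow, Real.logb_pow, Real.logb_self_eq_one (by norm_num : (1:ℝ) < 2),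
      mul_one] at h2
    calc ((n:ℝ) - 1) = ((n - 1 : ℕ) : ℝ) := by
          rw [Nat.cast_sub hn]; norm_num
    _ < (R:ℝ) * L := h2
  have hTn : n ≤ T := by
    by_contra hTc
    push_neg at hTc
    have hR0 : R = 0 := by
      rw [hR, Nat.sub_eq_zero_of_le (by omega), Nat.zero_div]
    rw [hR0] at hlog
    simp at hlog
    have : (1:ℝ) ≤ (n:ℝ) := by exact_mod_cast hn
    linarith
  have hRT : (R:ℝ) * ((n:ℝ) + 1) ≤ (T:ℝ) - (n:ℝ) := by
    have h1 : R * (n+1) ≤ T - n := Nat.div_mul_le_self _ _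
    have h2 : ((R * (n+1) : ℕ) : ℝ) ≤ ((T - n : ℕ) : ℝ) := by exact_mod_cast h1
    rw [Nat.cast_sub hTn] at h2
    push_cast at h2
    linarith
  have hL0 : (0:ℝ) ≤ L := by linarith
  have hn' : (1:ℝ) ≤ (n:ℝ) := by exact_mod_cast hn
  have e1 : ((n:ℝ) - 1) * ((n:ℝ) + 1) < ((R:ℝ) * L) * ((n:ℝ) + 1) :=
    mul_lt_mul_of_pos_right hlog (by positivity)
  have e2 : ((R:ℝ) * ((n:ℝ) + 1)) * L ≤ ((T:ℝ) - (n:ℝ)) * L :=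
    mul_le_mul_of_nonneg_right hRT hL0
  have e5 : (n:ℝ) * 1 ≤ (n:ℝ) * L := mul_le_mul_of_nonneg_left hL1 (by positivity)
  show (n:ℝ)^2 ≤ (T:ℝ) * L
  nlinarith [e1, e2, e5]

/-- `TS_{2DFA}(L_EQ(n)) = Θ(n²)`: there is a 2DFA recognizing
`L_EQ(n)` in time `O(n)` with `2^{O(n)}` states (hence `TS = O(n²)`), and every
2DFA recognizing `L_EQ(n)` has `TS ≥ n (D^cc(EQ_n) − 1) = n²`. -/
theorem TS_LEQ_theta_n_sq :
    ∃ C : ℕ, 0 < C ∧ ∀ n : ℕ, 1 ≤ n →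
      (∃ (M : TwoDFA (Option Bool)) (T : ℕ),
        M.Recognizes (Lf n (EQfun n)) T ∧ T ≤ C * n ∧ M.Q ≤ 2 ^ (C * n) ∧
        M.TS T ≤ (C : ℝ) * (n : ℝ) ^ 2) ∧
      (∀ (M : TwoDFA (Option Bool)) (T : ℕ),
        M.Recognizes (Lf n (EQfun n)) T → (n : ℝ) ^ 2 ≤ M.TS T) := by
  refine ⟨100, by norm_num, fun n hn => ⟨⟨UBM n, 3*n+2, UBM_recognizes n, by omega, ?_, ?_⟩,
    fun M T hrec => EQ_lower_bound n hn M T hrec⟩⟩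
  · exact le_trans (UBM_Q_le n hn) (Nat.pow_le_pow_right (by norm_num) (by omega))
  · simpa using UBM_TS_le n hn
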